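/- Let G and H be unital associative algebras over a field K such that G is Lie nilpotent (satisfies [x1,...,xp] = 0 for some p ≥ 3) and H satisfies [x1,x2,x3] = 0 and [x1,x2][x3,x4]···[x_{2k-1},x_{2k}] = 0 for some k ≥ 2. Then G ⊗ H is Lie nilpotent, i.e., satisfies [x1,...,xq] = 0 for some integer q ≥ p. -/

import Mathlib

open scoped TensorProduct

/-- The commutator `[a,b] = ab - ba` in a ring. -/
def rcomm {A : Type*} [Ring A] (a b : A) : A := a * b - b * a

/-- The left-normed commutator `[a, l₀, l₁, ...]`. -/
def lnc {A : Type*} [Ring A] (a : A) (l : List A) : A := l.foldl rcomm a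

/-- The algebra `A` satisfies the identity `[x_1, ..., x_q] = 0`. -/
def SatisfiesLieId (A : Type*) [Ring A] (q : ℕ) : Prop :=
  ∀ (a : A) (l : List A), l.length + 1 = q → lnc a l = 0

section BasicLnc

variable {A : Type*} [Ring A]

lemma rcomm_zero_left (b : A) : rcomm 0 b = 0 := by simp [rcomm]
lemma rcomm_zero_right (a : A) : rcomm a 0 = 0 := by simp [rcomm]
lemma rcomm_add_left (a a' b : A) : rcomm (a + a') b = rcomm a b + rcomm a' b := by
  simp only [rcomm, add_mul, mul_add]; abel
lemma rcomm_add_right (a b b' : A) : rcomm a (b + b') = rcomm a b + rcomm a b' := by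
  simp only [rcomm, add_mul, mul_add]; abel

lemma rcomm_smul_left {K : Type*} [Field K] [Algebra K A] (c : K) (a b : A) :
    rcomm (c • a) b = c • rcomm a b := by
  simp [rcomm, smul_mul_assoc, mul_smul_comm, smul_sub]

lemma lnc_nil (a : A) : lnc a [] = a := rfl
lemma lnc_cons (a y : A) (l : List A) : lnc a (y :: l) = lnc (rcomm a y) l := rfl
lemma lnc_append (a : A) (l1 l2 : List A) : lnc a (l1 ++ l2) = lnc (lnc a l1) l2 :=
  List.foldl_append
lemma lnc_concat (a y : A) (l : List A) : lnc a (l ++ [y]) = rcomm (lnc a l) y := by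
  rw [lnc_append]; rfl
lemma lnc_zero (l : List A) : lnc (0 : A) l = 0 := by
  induction l with
  | nil => rfl
  | cons y l ih => rw [lnc_cons, rcomm_zero_left]; exact ih
lemma lnc_add (a b : A) (l : List A) : lnc (a + b) l = lnc a l + lnc b l := by
  induction l generalizing a b with
  | nil => rfl
  | cons y l ih => rw [lnc_cons, rcomm_add_left, ih, lnc_cons, lnc_cons]

end BasicLnc

section Hside

variable (K : Type*) [Field K] (H : Type*) [Ring H] [Algebra K H]

/-- The `K`-span of commutators of `H`. -/
def Tc : Submodule K H := Submodule.span K {x | ∃ a b : H, x = rcomm a b}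

variable {K H}

lemma Tc_central (hH3 : ∀ x y z : H, rcomm (rcomm x y) z = 0) :
    ∀ t ∈ Tc K H, ∀ h : H, t * h = h * t := by
  intro t ht
  refine Submodule.span_induction ?_ ?_ ?_ ?_ ht
  · rintro x ⟨a, b, rfl⟩ h
    have := hH3 a b h
    rw [rcomm, sub_eq_zero] at this
    exact this
  · intro h; simp
  · intro x y _ _ hx hy h; rw [add_mul, mul_add, hx, hy]
  · intro c x _ hx h; rw [smul_mul_assoc, mul_smul_comm, hx]

lemma Tcpow_central (hH3 : ∀ x y z : H, rcomm (rcomm x y) z = 0) :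
    ∀ (j : ℕ), ∀ t ∈ (Tc K H) ^ j, ∀ h : H, t * h = h * t := by
  intro j
  induction j with
  | zero =>
    intro t ht h
    rw [pow_zero] at ht
    obtain ⟨c, rfl⟩ := Submodule.mem_one.mp ht
    rw [Algebra.commutes]
  | succ j ih =>
    intro t ht h
    rw [pow_succ] at ht
    refine Submodule.mul_induction_on ht ?_ ?_
    · intro m hm n hn
      rw [mul_assoc, Tc_central hH3 n hn h, ← mul_assoc, ih m hm h, mul_assoc]
    · intro x y hx hy; rw [add_mul, mul_add, hx, hy]

lemma Tcpow_le_span (j : ℕ) :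
    (Tc K H) ^ j ≤ Submodule.span K
      {y | ∃ a b : Fin j → H, y = (List.ofFn fun i => rcomm (a i) (b i)).prod} := by
  induction j with
  | zero =>
    rw [pow_zero]
    intro x hx
    obtain ⟨c, rfl⟩ := Submodule.mem_one.mp hx
    rw [Algebra.algebraMap_eq_smul_one]
    refine Submodule.smul_mem _ _ (Submodule.subset_span ?_)
    exact ⟨Fin.elim0, Fin.elim0, by simp⟩
  | succ j ih =>
    rw [pow_succ']
    intro x hx
    refine Submodule.mul_induction_on hx ?_ (fun x y hx hy => Submodule.add_mem _ hx hy)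
    intro m hm n hn
    have hn' := ih hn
    clear hn
    refine Submodule.span_induction ?_ ?_ ?_ ?_ hm
    · rintro c ⟨a, b, rfl⟩
      refine Submodule.span_induction ?_ ?_ ?_ ?_ hn'
      · rintro y ⟨aa, bb, rfl⟩
        refine Submodule.subset_span ⟨Fin.cons a aa, Fin.cons b bb, ?_⟩
        rw [List.ofFn_succ]
        simp [List.prod_cons]
      · simp
      · intro x y _ _ hx hy; rw [mul_add]; exact Submodule.add_mem _ hx hy
      · intro c' x _ hx; rw [mul_smul_comm]; exact Submodule.smul_mem _ _ hx
    · simp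
    · intro x y _ _ hx hy; rw [add_mul]; exact Submodule.add_mem _ hx hy
    · intro c' x _ hx; rw [smul_mul_assoc]; exact Submodule.smul_mem _ _ hx

lemma Tcpow_k_bot {k : ℕ}
    (hHk : ∀ a b : Fin k → H, (List.ofFn fun i => rcomm (a i) (b i)).prod = 0) :
    (Tc K H) ^ k = ⊥ := by
  refine le_bot_iff.mp ?_
  refine le_trans (Tcpow_le_span k) ?_
  rw [Submodule.span_le]
  rintro x ⟨a, b, rfl⟩
  simp [hHk a b]

variable (K H) in
/-- `U j = H · T^j`. -/
def Uc (j : ℕ) : Submodule K H := (⊤ : Submodule K H) * (Tc K H) ^ j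

lemma Uc_zero : Uc K H 0 = ⊤ := by rw [Uc, pow_zero, mul_one]

lemma Uc_k_bot {k : ℕ}
    (hHk : ∀ a b : Fin k → H, (List.ofFn fun i => rcomm (a i) (b i)).prod = 0) :
    Uc K H k = ⊥ := by
  rw [Uc, Tcpow_k_bot hHk, Submodule.mul_bot]

lemma Uc_antitone (j : ℕ) : Uc K H (j + 1) ≤ Uc K H j := by
  rw [Uc, Uc, pow_succ', ← mul_assoc]
  exact mul_le_mul' le_top le_rfl

lemma Uc_mul_right (hH3 : ∀ x y z : H, rcomm (rcomm x y) z = 0) {j : ℕ} {h : H}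
    (hh : h ∈ Uc K H j) (h' : H) : h * h' ∈ Uc K H j := by
  refine Submodule.mul_induction_on hh ?_ ?_
  · intro m _ n hn
    rw [mul_assoc, Tcpow_central hH3 j n hn h', ← mul_assoc]
    exact Submodule.mul_mem_mul trivial hn
  · intro x y hx hy; rw [add_mul]; exact Submodule.add_mem _ hx hy

lemma rcomm_mem_Uc_succ (hH3 : ∀ x y z : H, rcomm (rcomm x y) z = 0) {j : ℕ} {h : H}
    (hh : h ∈ Uc K H j) (h' : H) : rcomm h h' ∈ Uc K H (j + 1) := by
  refine Submodule.mul_induction_on hh ?_ ?_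
  · intro m _ n hn
    have key : rcomm (m * n) h' = rcomm m h' * n := by
      have hc := Tcpow_central hH3 j n hn
      simp only [rcomm, sub_mul]
      rw [mul_assoc, hc h', ← mul_assoc, mul_assoc h' m n]
    rw [key]
    have h1 : rcomm m h' * n ∈ (Tc K H) ^ (j + 1) := by
      rw [pow_succ']
      exact Submodule.mul_mem_mul (Submodule.subset_span ⟨m, h', rfl⟩) hn
    have := Submodule.mul_mem_mul (show (1:H) ∈ (⊤ : Submodule K H) from trivial) h1
    rwa [one_mul] at this
  · intro x y hx hy; rw [rcomm_add_left]; exact Submodule.add_mem _ hx hy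

end Hside

section Aside

variable {K : Type*} [Field K] {G H : Type*} [Ring G] [Ring H]
  [Algebra K G] [Algebra K H]

/-- Span of `m`-fold left-normed `G`-commutators tensored with elements of `U j`. -/
def Vm (K : Type*) [Field K] (G H : Type*) [Ring G] [Ring H] [Algebra K G] [Algebra K H]
    (j m : ℕ) : Submodule K (TensorProduct K G H) :=
  Submodule.span K {x | ∃ (g : G) (lg : List G) (h : H),
    lg.length = m ∧ h ∈ Uc K H j ∧ x = lnc g lg ⊗ₜ[K] h}

lemma Vm_le_Vm0 (j m : ℕ) : Vm K G H j m ≤ Vm K G H j 0 := by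
  refine Submodule.span_mono ?_
  rintro x ⟨g, lg, h, _, hh, rfl⟩
  exact ⟨lnc g lg, [], h, rfl, hh, rfl⟩

lemma Vm0_succ_le (j : ℕ) : Vm K G H (j + 1) 0 ≤ Vm K G H j 0 := by
  refine Submodule.span_mono ?_
  rintro x ⟨g, lg, h, hl, hh, rfl⟩
  exact ⟨g, lg, h, hl, Uc_antitone j hh, rfl⟩

lemma rcomm_tmul (u g' : G) (h h' : H) :
    rcomm (u ⊗ₜ[K] h) (g' ⊗ₜ[K] h') =
      (rcomm u g') ⊗ₜ[K] (h * h') + (g' * u) ⊗ₜ[K] (rcomm h h') := by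
  simp only [rcomm, Algebra.TensorProduct.tmul_mul_tmul, TensorProduct.sub_tmul,
    TensorProduct.tmul_sub]
  abel

lemma step1 (hH3 : ∀ x y z : H, rcomm (rcomm x y) z = 0) {j m : ℕ}
    {x : TensorProduct K G H} (hx : x ∈ Vm K G H j m) (y : TensorProduct K G H) :
    rcomm x y ∈ Vm K G H j (m + 1) ⊔ Vm K G H (j + 1) 0 := by
  induction hx using Submodule.span_induction generalizing y with
  | mem x hxs =>
    obtain ⟨g, lg, h, hl, hh, rfl⟩ := hxs
    induction y using TensorProduct.induction_on with
    | zero => rw [rcomm_zero_right]; exact Submodule.zero_mem _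
    | tmul g' h' =>
      rw [rcomm_tmul]
      refine Submodule.add_mem _ (Submodule.mem_sup_left ?_) (Submodule.mem_sup_right ?_)
      · refine Submodule.subset_span ⟨g, lg ++ [g'], h * h', ?_, Uc_mul_right hH3 hh h', ?_⟩
        · simp [hl]
        · rw [lnc_concat]
      · exact Submodule.subset_span
          ⟨g' * lnc g lg, [], rcomm h h', rfl, rcomm_mem_Uc_succ hH3 hh h', rfl⟩
    | add y1 y2 hy1 hy2 =>
      rw [rcomm_add_right]
      exact Submodule.add_mem _ hy1 hy2
  | zero => rw [rcomm_zero_left]; exact Submodule.zero_mem _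
  | add a b _ _ ha hb => rw [rcomm_add_left]; exact Submodule.add_mem _ (ha y) (hb y)
  | smul c a _ ha => rw [rcomm_smul_left]; exact Submodule.smul_mem _ _ (ha y)

lemma M_stable (hH3 : ∀ x y z : H, rcomm (rcomm x y) z = 0) {j : ℕ}
    {x : TensorProduct K G H} (hx : x ∈ Vm K G H j 0) (y : TensorProduct K G H) :
    rcomm x y ∈ Vm K G H j 0 := by
  have := step1 hH3 hx y
  exact (sup_le (Vm_le_Vm0 j 1) (Vm0_succ_le j) :
    Vm K G H j (0 + 1) ⊔ Vm K G H (j + 1) 0 ≤ Vm K G H j 0) this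

lemma I1 (hH3 : ∀ x y z : H, rcomm (rcomm x y) z = 0) {j : ℕ}
    {x : TensorProduct K G H} (hx : x ∈ Vm K G H j 0) (l : List (TensorProduct K G H)) :
    lnc x l ∈ Vm K G H j 0 := by
  induction l generalizing x with
  | nil => exact hx
  | cons y l ih => rw [lnc_cons]; exact ih (M_stable hH3 hx y)

lemma I2 (hH3 : ∀ x y z : H, rcomm (rcomm x y) z = 0) {j : ℕ}
    (l : List (TensorProduct K G H)) :
    ∀ (m : ℕ) (x : TensorProduct K G H), x ∈ Vm K G H j m →
      lnc x l ∈ Vm K G H j (m + l.length) ⊔ Vm K G H (j + 1) 0 := by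
  induction l with
  | nil =>
    intro m x hx
    simpa [lnc_nil] using Submodule.mem_sup_left hx
  | cons y l ih =>
    intro m x hx
    rw [lnc_cons]
    obtain ⟨v, hv, w, hw, hvw⟩ := Submodule.mem_sup.mp (step1 hH3 hx y)
    rw [← hvw, lnc_add]
    refine Submodule.add_mem _ ?_ ?_
    · have := ih (m + 1) v hv
      have harith : m + 1 + l.length = m + (y :: l).length := by
        simp; omega
      rwa [harith] at this
    · exact Submodule.mem_sup_right (I1 hH3 hw l)

lemma Vm_top_bot {p : ℕ} (hp : 3 ≤ p) (hG : SatisfiesLieId G p) (j : ℕ) :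
    Vm K G H j (p - 1) = ⊥ := by
  refine le_bot_iff.mp ?_
  rw [Vm, Submodule.span_le]
  rintro x ⟨g, lg, h, hl, _, rfl⟩
  have : lnc g lg = 0 := hG g lg (by omega)
  simp [this]

lemma chunk (hH3 : ∀ x y z : H, rcomm (rcomm x y) z = 0) {p : ℕ} (hp : 3 ≤ p)
    (hG : SatisfiesLieId G p) {j : ℕ} {x : TensorProduct K G H} (hx : x ∈ Vm K G H j 0)
    (l : List (TensorProduct K G H)) (hl : l.length = p - 1) :
    lnc x l ∈ Vm K G H (j + 1) 0 := by
  have := I2 hH3 l 0 x hx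
  rw [hl, zero_add, Vm_top_bot hp hG, bot_sup_eq] at this
  exact this

lemma main_ind (hH3 : ∀ x y z : H, rcomm (rcomm x y) z = 0) {p k : ℕ} (hp : 3 ≤ p)
    (hk : 2 ≤ k) (hG : SatisfiesLieId G p)
    (hHk : ∀ a b : Fin k → H, (List.ofFn fun i => rcomm (a i) (b i)).prod = 0) :
    ∀ (n j : ℕ) (x : TensorProduct K G H), x ∈ Vm K G H j 0 → k ≤ j + n →
      ∀ l : List (TensorProduct K G H), l.length = n * (p - 1) → lnc x l = 0 := by
  intro n
  induction n with
  | zero =>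
    intro j x hx hkj l hl
    -- x ∈ Vm j 0 ≤ Vm k 0 = ⊥
    have hmono : ∀ i j : ℕ, i ≤ j → Vm K G H j 0 ≤ Vm K G H i 0 := by
      intro i j hij
      induction j with
      | zero => simp_all
      | succ j ih =>
        rcases Nat.lt_or_ge i (j+1) with h | h
        · exact le_trans (Vm0_succ_le j) (ih (by omega))
        · have : i = j + 1 := by omega
          rw [this]
    have hxk : x ∈ Vm K G H k 0 := hmono k j (by omega) hx
    have hbot : Vm K G H k 0 = ⊥ := by
      refine le_bot_iff.mp ?_
      rw [Vm, Submodule.span_le]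
      rintro y ⟨g, lg, h, _, hh, rfl⟩
      rw [Uc_k_bot hHk] at hh
      have : h = 0 := by simpa using hh
      simp [this]
    rw [hbot] at hxk
    have hx0 : x = 0 := by simpa using hxk
    rw [hx0, lnc_zero]
  | succ n ih =>
    intro j x hx hkj l hl
    have hlen : p - 1 ≤ l.length := by
      rw [hl]
      calc p - 1 = 1 * (p - 1) := (one_mul _).symm
      _ ≤ (n + 1) * (p - 1) := Nat.mul_le_mul_right _ (by omega)
    have hsplit : l = l.take (p - 1) ++ l.drop (p - 1) := (List.take_append_drop _ _).symm
    rw [hsplit, lnc_append]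
    have htake : (l.take (p - 1)).length = p - 1 := by
      rw [List.length_take]; omega
    have hx' := chunk hH3 hp hG hx (l.take (p - 1)) htake
    refine ih (j + 1) _ hx' (by omega) _ ?_
    rw [List.length_drop, hl]
    have : (n + 1) * (p - 1) = n * (p - 1) + (p - 1) := by ring
    omega

end Aside

theorem stmt_5 (K : Type*) [Field K] (G H : Type*) [Ring G] [Ring H]
    [Algebra K G] [Algebra K H] (p k : ℕ) (hp : 3 ≤ p) (hk : 2 ≤ k)
    (hG : SatisfiesLieId G p)
    (hH3 : ∀ x y z : H, rcomm (rcomm x y) z = 0)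
    (hHk : ∀ a b : Fin k → H, (List.ofFn fun i => rcomm (a i) (b i)).prod = 0) :
    ∃ q, p ≤ q ∧ SatisfiesLieId (TensorProduct K G H) q := by
  refine ⟨k * (p - 1) + 1, ?_, ?_⟩
  · have h2 : 2 * (p - 1) ≤ k * (p - 1) := Nat.mul_le_mul_right _ hk
    omega
  · intro a l hl
    have ha : a ∈ Vm K G H 0 0 := by
      have htop : (⊤ : Submodule K (TensorProduct K G H)) ≤ Vm K G H 0 0 := by
        rw [← TensorProduct.span_tmul_eq_top K G H]
        refine Submodule.span_mono ?_
        rintro x ⟨g, h, rfl⟩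
        exact ⟨g, [], h, rfl, by rw [Uc_zero]; trivial, rfl⟩
      exact htop trivial
    exact main_ind hH3 hp hk hG hHk k 0 a ha (by omega) l (by omega)
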